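/- Let G be a group and H ≤ G a subgroup. Then the set E = H\G/H of (H,H)-double cosets, equipped with the hyperoperation C(g₁) ∘ C(g₂) = {C(g₁ h g₂) : h ∈ H}, the scalar identity C(1) = H, and inversion C(g)‾ = C(g⁻¹), is a polygroup. -/
import Mathlib

/-- A polygroup (quasicanonical hypergroup): a nonempty-valued hyperoperation that is
associative, satisfies the reproduction axiom, has a scalar identity `e`, and an
inversion `inv` with `b/a = b ∘ ā` and `a\b = ā ∘ b`. -/
structure Polygroup (E : Type*) where
  hmul : E → E → Set E
  e : E
  inv : E → E
  hmul_nonempty : ∀ a b : E, (hmul a b).Nonempty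
  hmul_assoc : ∀ a b c : E, (⋃ u ∈ hmul b c, hmul a u) = ⋃ v ∈ hmul a b, hmul v c
  repro_left : ∀ a : E, (⋃ x : E, hmul x a) = Set.univ
  repro_right : ∀ a : E, (⋃ x : E, hmul a x) = Set.univ
  hmul_e : ∀ a : E, hmul a e = {a}
  e_hmul : ∀ a : E, hmul e a = {a}
  div_eq : ∀ a b : E, {x : E | b ∈ hmul x a} = hmul b (inv a)
  ldiv_eq : ∀ a b : E, {x : E | b ∈ hmul a x} = hmul (inv a) b

/-- The double coset `HgH`. -/
def DC {G : Type*} [Group G] (H : Subgroup G) (g : G) : Set G :=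
  {x : G | ∃ h₁ ∈ H, ∃ h₂ ∈ H, x = h₁ * g * h₂}

namespace DCpoly

variable {G : Type*} [Group G] (H : Subgroup G)

abbrev E (H : Subgroup G) := {s : Set G // ∃ g : G, s = DC H g}

lemma mem_dc_self (g : G) : g ∈ DC H g := ⟨1, H.one_mem, 1, H.one_mem, by group⟩

lemma dc_smul {h₁ h₂ : G} (hh₁ : h₁ ∈ H) (hh₂ : h₂ ∈ H) (g : G) :
    DC H (h₁ * g * h₂) = DC H g := by
  ext x
  constructor
  · rintro ⟨a, ha, b, hb, rfl⟩
    exact ⟨a * h₁, H.mul_mem ha hh₁, h₂ * b, H.mul_mem hh₂ hb, by group⟩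
  · rintro ⟨a, ha, b, hb, rfl⟩
    exact ⟨a * h₁⁻¹, H.mul_mem ha (H.inv_mem hh₁), h₂⁻¹ * b,
      H.mul_mem (H.inv_mem hh₂) hb, by group⟩

lemma dc_eq_iff {g g' : G} :
    DC H g = DC H g' ↔ ∃ a ∈ H, ∃ b ∈ H, g' = a * g * b := by
  constructor
  · intro h
    have := mem_dc_self H g'
    rw [← h] at this
    exact this
  · rintro ⟨a, ha, b, hb, rfl⟩
    exact (dc_smul H ha hb g).symm

lemma dc_inv {g g' : G} (h : DC H g = DC H g') : DC H g⁻¹ = DC H g'⁻¹ := by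
  obtain ⟨a, ha, b, hb, rfl⟩ := (dc_eq_iff H).1 h
  have : (a * g * b)⁻¹ = b⁻¹ * g⁻¹ * a⁻¹ := by group
  rw [this, dc_smul H (H.inv_mem hb) (H.inv_mem ha)]

def hmulS (C₁ C₂ : E H) : Set (E H) :=
  {C | ∃ g₁ g₂ : G, C₁.1 = DC H g₁ ∧ C₂.1 = DC H g₂ ∧
    ∃ h ∈ H, C.1 = DC H (g₁ * h * g₂)}

lemma hmulS_spec {C₁ C₂ : E H} {g₁ g₂ : G}
    (e₁ : C₁.1 = DC H g₁) (e₂ : C₂.1 = DC H g₂) :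
    hmulS H C₁ C₂ = {C : E H | ∃ h ∈ H, C.1 = DC H (g₁ * h * g₂)} := by
  ext C
  constructor
  · rintro ⟨g₁', g₂', e₁', e₂', h, hh, hC⟩
    obtain ⟨a, ha, b, hb, rfl⟩ := (dc_eq_iff H).1 (e₁.symm.trans e₁')
    obtain ⟨c, hc, d, hd, rfl⟩ := (dc_eq_iff H).1 (e₂.symm.trans e₂')
    refine ⟨b * h * c, H.mul_mem (H.mul_mem hb hh) hc, ?_⟩
    have key : (a * g₁ * b) * h * (c * g₂ * d) = a * (g₁ * (b * h * c) * g₂) * d := by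
      group
    rw [hC, key, dc_smul H ha hd]
  · rintro ⟨h, hh, hC⟩
    exact ⟨g₁, g₂, e₁, e₂, h, hh, hC⟩

def mk (g : G) : E H := ⟨DC H g, g, rfl⟩

lemma mem_hmulS_iff {C₁ C₂ C : E H} {g₁ g₂ : G}
    (e₁ : C₁.1 = DC H g₁) (e₂ : C₂.1 = DC H g₂) :
    C ∈ hmulS H C₁ C₂ ↔ ∃ h ∈ H, C.1 = DC H (g₁ * h * g₂) := by
  rw [hmulS_spec H e₁ e₂]; rfl

end DCpoly

open DCpoly in
theorem doubleCoset_polygroup {G : Type*} [Group G] (H : Subgroup G) :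
    ∃ P : Polygroup {s : Set G // ∃ g : G, s = DC H g},
      (∀ (g₁ g₂ : G) (C₁ C₂ : {s : Set G // ∃ g : G, s = DC H g}),
          C₁.1 = DC H g₁ → C₂.1 = DC H g₂ →
          P.hmul C₁ C₂ = {C : {s : Set G // ∃ g : G, s = DC H g} |
            ∃ h ∈ H, C.1 = DC H (g₁ * h * g₂)}) ∧
      P.e.1 = DC H 1 ∧
      ∀ (g : G) (C : {s : Set G // ∃ g : G, s = DC H g}),
        C.1 = DC H g → (P.inv C).1 = DC H g⁻¹ := by
  have invdef : ∀ C : E H, (mk H (C.2.choose)⁻¹).1 = DC H (C.2.choose)⁻¹ := fun C => rfl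
  have inv_spec : ∀ (g : G) (C : E H), C.1 = DC H g →
      (mk H (C.2.choose)⁻¹).1 = DC H g⁻¹ := by
    intro g C hC
    have h1 : C.1 = DC H C.2.choose := C.2.choose_spec
    exact dc_inv H (h1.symm.trans hC)
  refine ⟨{ hmul := hmulS H
            e := mk H 1
            inv := fun C => mk H (C.2.choose)⁻¹
            hmul_nonempty := ?_
            hmul_assoc := ?_
            repro_left := ?_
            repro_right := ?_
            hmul_e := ?_
            e_hmul := ?_
            div_eq := ?_
            ldiv_eq := ?_ },
          fun g₁ g₂ C₁ C₂ e₁ e₂ => hmulS_spec H e₁ e₂, rfl,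
          fun g C hC => inv_spec g C hC⟩
  · -- nonempty
    intro a b
    obtain ⟨ga, ha⟩ := a.2
    obtain ⟨gb, hb⟩ := b.2
    exact ⟨mk H (ga * gb), (mem_hmulS_iff H ha hb).2
      ⟨1, H.one_mem, by show DC H (ga * gb) = _; group⟩⟩
  · -- assoc
    intro a b c
    obtain ⟨ga, ha⟩ := a.2
    obtain ⟨gb, hb⟩ := b.2
    obtain ⟨gc, hc⟩ := c.2
    ext C
    simp only [Set.mem_iUnion, exists_prop]
    constructor
    · rintro ⟨u, hu, hCu⟩
      rw [mem_hmulS_iff H hb hc] at hu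
      obtain ⟨h, hh, hu'⟩ := hu
      rw [mem_hmulS_iff H ha hu'] at hCu
      obtain ⟨h', hh', hC⟩ := hCu
      refine ⟨mk H (ga * h' * gb), (mem_hmulS_iff H ha hb).2 ⟨h', hh', rfl⟩, ?_⟩
      refine (mem_hmulS_iff H (C₁ := mk H (ga * h' * gb)) rfl hc).2 ⟨h, hh, ?_⟩
      rw [hC]; group
    · rintro ⟨v, hv, hCv⟩
      rw [mem_hmulS_iff H ha hb] at hv
      obtain ⟨h, hh, hv'⟩ := hv
      rw [mem_hmulS_iff H hv' hc] at hCv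
      obtain ⟨h', hh', hC⟩ := hCv
      refine ⟨mk H (gb * h' * gc), (mem_hmulS_iff H hb hc).2 ⟨h', hh', rfl⟩, ?_⟩
      refine (mem_hmulS_iff H (C₂ := mk H (gb * h' * gc)) ha rfl).2 ⟨h, hh, ?_⟩
      rw [hC]; group
  · -- repro_left
    intro a
    ext C
    simp only [Set.mem_iUnion, Set.mem_univ, iff_true]
    obtain ⟨ga, ha⟩ := a.2
    obtain ⟨gc, hc⟩ := C.2
    refine ⟨mk H (gc * ga⁻¹), (mem_hmulS_iff H (C₁ := mk H (gc * ga⁻¹)) rfl ha).2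
      ⟨1, H.one_mem, ?_⟩⟩
    rw [hc]; group
  · -- repro_right
    intro a
    ext C
    simp only [Set.mem_iUnion, Set.mem_univ, iff_true]
    obtain ⟨ga, ha⟩ := a.2
    obtain ⟨gc, hc⟩ := C.2
    refine ⟨mk H (ga⁻¹ * gc), (mem_hmulS_iff H (C₂ := mk H (ga⁻¹ * gc)) ha rfl).2
      ⟨1, H.one_mem, ?_⟩⟩
    rw [hc]; group
  · -- hmul_e
    intro a
    obtain ⟨ga, ha⟩ := a.2
    rw [hmulS_spec H ha (rfl : (mk H 1).1 = DC H 1)]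
    ext C
    simp only [Set.mem_setOf_eq, Set.mem_singleton_iff]
    constructor
    · rintro ⟨h, hh, hC⟩
      have : ga * h * 1 = 1 * ga * h := by group
      rw [this, dc_smul H H.one_mem hh] at hC
      exact Subtype.ext (hC.trans ha.symm)
    · rintro rfl
      exact ⟨1, H.one_mem, by rw [ha]; group⟩
  · -- e_hmul
    intro a
    obtain ⟨ga, ha⟩ := a.2
    rw [hmulS_spec H (rfl : (mk H 1).1 = DC H 1) ha]
    ext C
    simp only [Set.mem_setOf_eq, Set.mem_singleton_iff]
    constructor
    · rintro ⟨h, hh, hC⟩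
      have : 1 * h * ga = h * ga * 1 := by group
      rw [this, dc_smul H hh H.one_mem] at hC
      exact Subtype.ext (hC.trans ha.symm)
    · rintro rfl
      exact ⟨1, H.one_mem, by rw [ha]; group⟩
  · -- div_eq
    intro a b
    obtain ⟨ga, ha⟩ := a.2
    obtain ⟨gb, hb⟩ := b.2
    rw [hmulS_spec H hb (inv_spec ga a ha)]
    ext x
    obtain ⟨gx, hx⟩ := x.2
    simp only [Set.mem_setOf_eq]
    rw [mem_hmulS_iff H hx ha]
    constructor
    · rintro ⟨h, hh, hbc⟩
      obtain ⟨p, hp, q, hq, hpq⟩ := (dc_eq_iff H).1 (hb.symm.trans hbc)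
      refine ⟨q, hq, ?_⟩
      have e1 : gx = p * gb * q * (ga⁻¹ * h⁻¹) := by rw [← hpq]; group
      have e2 : gx = p * (gb * q * ga⁻¹) * h⁻¹ := by rw [e1]; group
      rw [hx, e2, dc_smul H hp (H.inv_mem hh)]
    · rintro ⟨h, hh, hxc⟩
      obtain ⟨p, hp, q, hq, hpq⟩ := (dc_eq_iff H).1 (hx.symm.trans hxc)
      refine ⟨q, hq, ?_⟩
      have e1 : gb = p * gx * q * (ga * h⁻¹) := by rw [← hpq]; group
      have e2 : gb = p * (gx * q * ga) * h⁻¹ := by rw [e1]; group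
      rw [hb, e2, dc_smul H hp (H.inv_mem hh)]
  · -- ldiv_eq
    intro a b
    obtain ⟨ga, ha⟩ := a.2
    obtain ⟨gb, hb⟩ := b.2
    rw [hmulS_spec H (inv_spec ga a ha) hb]
    ext x
    obtain ⟨gx, hx⟩ := x.2
    simp only [Set.mem_setOf_eq]
    rw [mem_hmulS_iff H ha hx]
    constructor
    · rintro ⟨h, hh, hbc⟩
      obtain ⟨p, hp, q, hq, hpq⟩ := (dc_eq_iff H).1 (hb.symm.trans hbc)
      refine ⟨p, hp, ?_⟩
      have e1 : gx = h⁻¹ * ga⁻¹ * (p * gb * q) := by rw [← hpq]; group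
      have e2 : gx = h⁻¹ * (ga⁻¹ * p * gb) * q := by rw [e1]; group
      rw [hx, e2, dc_smul H (H.inv_mem hh) hq]
    · rintro ⟨h, hh, hxc⟩
      obtain ⟨p, hp, q, hq, hpq⟩ := (dc_eq_iff H).1 (hx.symm.trans hxc)
      refine ⟨p, hp, ?_⟩
      have e1 : gb = h⁻¹ * ga * (p * gx * q) := by rw [← hpq]; group
      have e2 : gb = h⁻¹ * (ga * p * gx) * q := by rw [e1]; group
      rw [hb, e2, dc_smul H (H.inv_mem hh) hq]
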